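/- Consider a single buyer with values 1, 2, 2+δ (0 < δ < 1) occurring with probabilities 1/3, 5/9, 1/9. Under the disclosure partition {{1, 2+δ}, {2}}: conditional on the message {1, 2+δ}, the posterior puts probability 3/4 on value 1 and 1/4 on value 2+δ, and price 1 yields seller revenue 1 which exceeds (2+δ)/4; hence the seller prices at 1 and the buyer's ex ante utility is at least (1/9)·(1+δ). In contrast, for any equilibrium where every message sent is a set of consecutive values (connected), the buyer's ex ante utility is at most δ/9. -/

import Mathlib

open Finset

/-- Buyer values: 1, 2, 2 + δ. -/
noncomputable def vals (δ : ℝ) : Fin 3 → ℝ := ![1, 2, 2 + δ]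

/-- Prior probabilities: 1/3, 5/9, 1/9. -/
noncomputable def probs : Fin 3 → ℝ := ![1/3, 5/9, 1/9]

/-- (Unnormalized) expected revenue of posting price `r` to a buyer known to have a type
in the message `M`. -/
noncomputable def rev (δ : ℝ) (M : Finset (Fin 3)) (r : ℝ) : ℝ :=
  r * ∑ i ∈ M.filter (fun i => r ≤ vals δ i), probs i

/-- A message is connected if it is a set of consecutive types. -/
def IsInterval (M : Finset (Fin 3)) : Prop :=
  ∀ i j k : Fin 3, i ∈ M → k ∈ M → i ≤ j → j ≤ k → j ∈ M

lemma rev_eval (δ : ℝ) (M : Finset (Fin 3)) (r : ℝ) :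
    rev δ M r = r * ∑ i ∈ M, if r ≤ vals δ i then probs i else 0 := by
  rw [rev, Finset.sum_filter]

theorem connected_inapproximable (δ : ℝ) (h0 : 0 < δ) (h1 : δ < 1) :
    -- posterior on the message {1, 2+δ}:
    probs 0 / (probs 0 + probs 2) = 3/4 ∧
    probs 2 / (probs 0 + probs 2) = 1/4 ∧
    -- posting price 1 yields (posterior) revenue 1, which exceeds revenue (2+δ)/4
    -- from price 2+δ, so the seller prices at 1:
    (1 : ℝ) * (3/4 + 1/4) = 1 ∧ (2 + δ) / 4 < 1 ∧
    -- hence the buyer's ex ante utility under the partition {{1, 2+δ}, {2}}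
    -- (type 1 and type 2+δ pay 1; type 2 pays 2) is at least (1/9)·(1+δ):
    (1/9 : ℝ) * (1 + δ) ≤
      probs 0 * (vals δ 0 - 1) + probs 1 * (vals δ 1 - 2) + probs 2 * (vals δ 2 - 1) ∧
    -- but in any equilibrium where every message is connected, ex ante utility ≤ δ/9:
    (∀ (part : Fin 3 → Finset (Fin 3)) (price : Finset (Fin 3) → ℝ),
      (∀ i, i ∈ part i) →
      (∀ i j, j ∈ part i → part j = part i) →
      (∀ i, IsInterval (part i)) →
      -- the seller posts a revenue-maximizing price among the values in the message:
      (∀ i, ∃ j ∈ part i, price (part i) = vals δ j) →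
      (∀ i, ∀ j ∈ part i, rev δ (part i) (vals δ j) ≤ rev δ (part i) (price (part i))) →
      (∑ i, probs i *
          (if price (part i) ≤ vals δ i then vals δ i - price (part i) else 0)) ≤ δ/9) := by
  refine ⟨by simp [probs]; norm_num, by simp [probs]; norm_num, by norm_num, by linarith,
    by simp [vals, probs]; linarith, ?_⟩
  intro part price hmem hcons hint hpe hmax
  have hv0 : vals δ (0 : Fin 3) = 1 := by simp [vals]
  have hv1 : vals δ (1 : Fin 3) = 2 := by simp [vals]
  have hv2 : vals δ (2 : Fin 3) = 2 + δ := by simp [vals]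
  -- revenue evaluations on candidate messages
  have e012 : ∀ r : ℝ, rev δ ({0,1,2} : Finset (Fin 3)) r =
      r * ((if r ≤ 1 then (1:ℝ)/3 else 0) + ((if r ≤ 2 then (5:ℝ)/9 else 0) +
        (if r ≤ 2 + δ then (1:ℝ)/9 else 0))) := by
    intro r
    rw [rev_eval, show ({0,1,2} : Finset (Fin 3)) = insert 0 (insert 1 {2}) from rfl,
      Finset.sum_insert (by decide), Finset.sum_insert (by decide), Finset.sum_singleton]
    simp [vals, probs]
  have e01 : ∀ r : ℝ, rev δ ({0,1} : Finset (Fin 3)) r =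
      r * ((if r ≤ 1 then (1:ℝ)/3 else 0) + (if r ≤ 2 then (5:ℝ)/9 else 0)) := by
    intro r
    rw [rev_eval, show ({0,1} : Finset (Fin 3)) = insert 0 {1} from rfl,
      Finset.sum_insert (by decide), Finset.sum_singleton]
    simp [vals, probs]
  have e12 : ∀ r : ℝ, rev δ ({1,2} : Finset (Fin 3)) r =
      r * ((if r ≤ 2 then (5:ℝ)/9 else 0) + (if r ≤ 2 + δ then (1:ℝ)/9 else 0)) := by
    intro r
    rw [rev_eval, show ({1,2} : Finset (Fin 3)) = insert 1 {2} from rfl,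
      Finset.sum_insert (by decide), Finset.sum_singleton]
    simp [vals, probs]
  rw [Fin.sum_univ_three]
  by_cases h1m : (1 : Fin 3) ∈ part 0
  · have hM1 : part 1 = part 0 := hcons 0 1 h1m
    by_cases h2m : (2 : Fin 3) ∈ part 0
    · -- part 0 = {0,1,2}
      have hM : part 0 = ({0,1,2} : Finset (Fin 3)) := by
        apply Finset.ext; intro x
        fin_cases x <;> simp [hmem 0, h1m, h2m]
      have hM2 : part 2 = part 0 := hcons 0 2 h2m
      have hp2 : price (part 0) = 2 := by
        rw [hM]
        obtain ⟨j, hj, hpj⟩ := hpe 0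
        rw [hM] at hj hpj
        have hmx := hmax 0 1 h1m
        rw [hM] at hmx
        fin_cases j
        · exfalso
          simp [vals] at hpj
          rw [hpj, hv1, e012, e012] at hmx
          rw [if_neg (by norm_num), if_pos (by norm_num), if_pos (by linarith),
            if_pos (by norm_num), if_pos (by norm_num), if_pos (by linarith)] at hmx
          linarith
        · simpa [vals] using hpj
        · exfalso
          simp [vals] at hpj
          rw [hpj, hv1, e012, e012] at hmx
          rw [if_neg (by norm_num), if_pos (by norm_num), if_pos (by linarith),
            if_neg (by linarith), if_neg (by linarith), if_pos (by norm_num)] at hmx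
          linarith
      rw [hM1, hM2, hp2]
      simp only [vals, probs, Matrix.cons_val_zero, Matrix.cons_val_one, Matrix.head_cons,
        Matrix.cons_val_two, Matrix.tail_cons]
      norm_num [h0.le]
      linarith
    · -- part 0 = {0,1}, part 2 = {2}
      have hM : part 0 = ({0,1} : Finset (Fin 3)) := by
        apply Finset.ext; intro x
        fin_cases x <;> simp [hmem 0, h1m, h2m]
      have h02 : (0 : Fin 3) ∉ part 2 := fun h => h2m (by rw [hcons 2 0 h]; exact hmem 2)
      have h12 : (1 : Fin 3) ∉ part 2 := fun h => by
        have : part 1 = part 2 := hcons 2 1 h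
        exact h2m (by rw [← hM1, this]; exact hmem 2)
      have hM2 : part 2 = ({2} : Finset (Fin 3)) := by
        apply Finset.ext; intro x
        fin_cases x <;> simp [hmem 2, h02, h12]
      have hp2 : price (part 0) = 2 := by
        rw [hM]
        obtain ⟨j, hj, hpj⟩ := hpe 0
        rw [hM] at hj hpj
        have hmx := hmax 0 1 h1m
        rw [hM] at hmx
        fin_cases j
        · exfalso
          simp [vals] at hpj
          rw [hpj, hv1, e01, e01] at hmx
          rw [if_neg (by norm_num), if_pos (by norm_num),
            if_pos (by norm_num), if_pos (by norm_num)] at hmx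
          linarith
        · simpa [vals] using hpj
        · exact absurd hj (by decide)
      have hp3 : price (part 2) = 2 + δ := by
        rw [hM2]
        obtain ⟨j, hj, hpj⟩ := hpe 2
        rw [hM2] at hj hpj
        fin_cases j
        · exact absurd hj (by decide)
        · exact absurd hj (by decide)
        · simpa [vals] using hpj
      rw [hM1, hp2, hp3]
      simp only [vals, probs, Matrix.cons_val_zero, Matrix.cons_val_one, Matrix.head_cons,
        Matrix.cons_val_two, Matrix.tail_cons]
      norm_num [h0.le]
      linarith
  · -- part 0 = {0}
    have h2m : (2 : Fin 3) ∉ part 0 := fun h =>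
      h1m (hint 0 0 1 2 (hmem 0) h (by decide) (by decide))
    have hM : part 0 = ({0} : Finset (Fin 3)) := by
      apply Finset.ext; intro x
      fin_cases x <;> simp [hmem 0, h1m, h2m]
    have hp0 : price (part 0) = 1 := by
      rw [hM]
      obtain ⟨j, hj, hpj⟩ := hpe 0
      rw [hM] at hj hpj
      fin_cases j
      · simpa [vals] using hpj
      · exact absurd hj (by decide)
      · exact absurd hj (by decide)
    have h01 : (0 : Fin 3) ∉ part 1 := fun h => h1m (by rw [hcons 1 0 h]; exact hmem 1)
    by_cases h21 : (2 : Fin 3) ∈ part 1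
    · -- part 1 = {1,2}
      have hM1 : part 1 = ({1,2} : Finset (Fin 3)) := by
        apply Finset.ext; intro x
        fin_cases x <;> simp [hmem 1, h01, h21]
      have hM2 : part 2 = part 1 := hcons 1 2 h21
      have hp1 : price (part 1) = 2 := by
        rw [hM1]
        obtain ⟨j, hj, hpj⟩ := hpe 1
        rw [hM1] at hj hpj
        have hmx := hmax 1 1 (hmem 1)
        rw [hM1] at hmx
        fin_cases j
        · exact absurd hj (by decide)
        · simpa [vals] using hpj
        · exfalso
          simp [vals] at hpj
          rw [hpj, hv1, e12, e12] at hmx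
          rw [if_pos (by norm_num), if_pos (by linarith), if_neg (by linarith),
            if_pos (by norm_num)] at hmx
          linarith
      rw [hM2, hp0, hp1]
      simp only [vals, probs, Matrix.cons_val_zero, Matrix.cons_val_one, Matrix.head_cons,
        Matrix.cons_val_two, Matrix.tail_cons]
      norm_num [h0.le]
      linarith
    · -- part 1 = {1}, part 2 = {2}
      have hM1 : part 1 = ({1} : Finset (Fin 3)) := by
        apply Finset.ext; intro x
        fin_cases x <;> simp [hmem 1, h01, h21]
      have h02 : (0 : Fin 3) ∉ part 2 := fun h => h2m (by rw [hcons 2 0 h]; exact hmem 2)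
      have h12 : (1 : Fin 3) ∉ part 2 := fun h => h21 (by rw [hcons 2 1 h]; exact hmem 2)
      have hM2 : part 2 = ({2} : Finset (Fin 3)) := by
        apply Finset.ext; intro x
        fin_cases x <;> simp [hmem 2, h02, h12]
      have hp1 : price (part 1) = 2 := by
        rw [hM1]
        obtain ⟨j, hj, hpj⟩ := hpe 1
        rw [hM1] at hj hpj
        fin_cases j
        · exact absurd hj (by decide)
        · simpa [vals] using hpj
        · exact absurd hj (by decide)
      have hp2 : price (part 2) = 2 + δ := by
        rw [hM2]
        obtain ⟨j, hj, hpj⟩ := hpe 2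
        rw [hM2] at hj hpj
        fin_cases j
        · exact absurd hj (by decide)
        · exact absurd hj (by decide)
        · simpa [vals] using hpj
      rw [hp0, hp1, hp2]
      simp only [vals, probs, Matrix.cons_val_zero, Matrix.cons_val_one, Matrix.head_cons,
        Matrix.cons_val_two, Matrix.tail_cons]
      norm_num [h0.le]
      linarith
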